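/- Let n and s be coprime integers with 2 ≤ n < s. Let Λ = {(i,j) ∈ ℕ² : 0 ≤ j ≤ n-1 and n·i + s·j < n·s}, and let R = ℚ[λ_{ij} : (i,j) ∈ Λ] be the polynomial ring graded by assigning the variable λ_{ij} weight ns - ni - sj. Then there exists a unique formal power series u = ∑_{k≥0} c_k t^k ∈ R[[t]] with constant term c_0 = 1 satisfying u^n = 1 + ∑_{(i,j)∈Λ} λ_{ij} · t^{ns-ni-sj} · u^j, and moreover each coefficient c_k ∈ R is weighted homogeneous of weight k. (Equivalently: setting x = t^{-n} and y = t^{-s}·u gives the unique branch of the curve y^n = x^s + ∑_{(i,j)∈Λ} λ_{ij} x^i y^j at infinity of the form y = t^{-s}(1 + O(t)), and its Taylor coefficients c_k lie in ℚ[{λ_{ij}}] and are homogeneous of degree k.) -/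

import Mathlib

open MvPolynomial PowerSeries Finset

namespace BranchAux

abbrev Rg : Type := MvPolynomial (ℕ × ℕ) ℚ

variable (n s : ℕ)

noncomputable def Gm (u : PowerSeries Rg) : PowerSeries Rg :=
  1 + ∑ p ∈ (Finset.range s ×ˢ Finset.range n).filter
      (fun p => n * p.1 + s * p.2 < n * s),
    PowerSeries.C (R := Rg) (MvPolynomial.X p) *
      (PowerSeries.X : PowerSeries Rg) ^ (n * s - n * p.1 - s * p.2) * u ^ p.2

lemma wt_pos {p : ℕ × ℕ} (hp : p ∈ (Finset.range s ×ˢ Finset.range n).filter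
      (fun p => n * p.1 + s * p.2 < n * s)) : 1 ≤ n * s - n * p.1 - s * p.2 := by
  have := (Finset.mem_filter.mp hp).2
  omega

variable {n s}

lemma X_pow_dvd_pow_sub {u v : PowerSeries Rg} {k : ℕ} (m : ℕ)
    (h : (X : PowerSeries Rg) ^ k ∣ u - v) :
    (X : PowerSeries Rg) ^ k ∣ u ^ m - v ^ m := by
  rw [← geom_sum₂_mul]
  exact h.mul_left _

lemma coeff_pow_key {u v : PowerSeries Rg} {k : ℕ} (m : ℕ)
    (h : (X : PowerSeries Rg) ^ k ∣ u - v)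
    (h0 : constantCoeff (R := Rg) u = constantCoeff (R := Rg) v) :
    coeff (R := Rg) k (u ^ m) - coeff (R := Rg) k (v ^ m)
      = (m : Rg) * (constantCoeff (R := Rg) u) ^ (m - 1) * (coeff (R := Rg) k u - coeff (R := Rg) k v) := by
  obtain ⟨d, hd⟩ := h
  have h1 : u ^ m - v ^ m
      = (X : PowerSeries Rg) ^ k * ((∑ i ∈ range m, u ^ i * v ^ (m - 1 - i)) * d) := by
    rw [← geom_sum₂_mul, hd]; ring
  have h2 : coeff (R := Rg) k (u ^ m) - coeff (R := Rg) k (v ^ m)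
      = constantCoeff (R := Rg) ((∑ i ∈ range m, u ^ i * v ^ (m - 1 - i)) * d) := by
    rw [← map_sub, h1]
    have := coeff_X_pow_mul ((∑ i ∈ range m, u ^ i * v ^ (m - 1 - i)) * d) k 0
    simpa [coeff_zero_eq_constantCoeff] using this
  have h3 : coeff (R := Rg) k u - coeff (R := Rg) k v = constantCoeff (R := Rg) d := by
    rw [← map_sub, hd]
    have := coeff_X_pow_mul d k 0
    simpa [coeff_zero_eq_constantCoeff] using this
  have h4 : constantCoeff (R := Rg) (∑ i ∈ range m, u ^ i * v ^ (m - 1 - i))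
      = (m : Rg) * (constantCoeff (R := Rg) u) ^ (m - 1) := by
    rw [map_sum]
    have hterm : ∀ i ∈ range m,
        constantCoeff (R := Rg) (u ^ i * v ^ (m - 1 - i)) = (constantCoeff (R := Rg) u) ^ (m - 1) := by
      intro i hi
      rw [map_mul, map_pow, map_pow, ← h0, ← pow_add]
      congr 1
      have := mem_range.mp hi
      omega
    rw [Finset.sum_congr rfl hterm, Finset.sum_const, card_range, nsmul_eq_mul]
  rw [h2, h3, map_mul, h4]

lemma Gm_dvd {u v : PowerSeries Rg} {k : ℕ} (h : (X : PowerSeries Rg) ^ k ∣ u - v) :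
    (X : PowerSeries Rg) ^ (k + 1) ∣ Gm n s u - Gm n s v := by
  have heq : Gm n s u - Gm n s v = ∑ p ∈ (Finset.range s ×ˢ Finset.range n).filter
      (fun p => n * p.1 + s * p.2 < n * s),
      PowerSeries.C (R := Rg) (MvPolynomial.X p) *
        ((X : PowerSeries Rg) ^ (n * s - n * p.1 - s * p.2) * (u ^ p.2 - v ^ p.2)) := by
    unfold Gm
    rw [add_sub_add_left_eq_sub, ← Finset.sum_sub_distrib]
    exact Finset.sum_congr rfl (fun p _ => by ring)
  rw [heq]
  apply Finset.dvd_sum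
  intro p hp
  apply Dvd.dvd.mul_left
  rw [pow_succ']
  exact mul_dvd_mul (dvd_pow_self _ (by have := wt_pos n s hp; omega))
    (X_pow_dvd_pow_sub p.2 h)

lemma coeff_eq_of_dvd {u v : PowerSeries Rg} {k i : ℕ} (hik : i < k)
    (h : (X : PowerSeries Rg) ^ k ∣ u - v) : coeff (R := Rg) i u = coeff (R := Rg) i v := by
  have := X_pow_dvd_iff.mp h i hik
  rw [map_sub, sub_eq_zero] at this
  exact this

lemma Gm_constantCoeff (u : PowerSeries Rg) : coeff (R := Rg) 0 (Gm n s u) = 1 := by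
  unfold Gm
  rw [map_add, map_sum]
  have : ∀ p ∈ (Finset.range s ×ˢ Finset.range n).filter
      (fun p => n * p.1 + s * p.2 < n * s),
      coeff (R := Rg) 0 (PowerSeries.C (R := Rg) (MvPolynomial.X p) *
        (X : PowerSeries Rg) ^ (n * s - n * p.1 - s * p.2) * u ^ p.2) = 0 := by
    intro p hp
    rw [mul_assoc, PowerSeries.coeff_C_mul, coeff_zero_eq_constantCoeff, map_mul, map_pow,
      PowerSeries.constantCoeff_X, zero_pow (by have := wt_pos n s hp; omega), zero_mul, mul_zero]
  rw [Finset.sum_congr rfl this, Finset.sum_const, smul_zero, add_zero]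
  simp


lemma IsWH.sub {w : ℕ × ℕ → ℕ} {m : ℕ} {φ ψ : Rg}
    (h1 : IsWeightedHomogeneous w φ m) (h2 : IsWeightedHomogeneous w ψ m) :
    IsWeightedHomogeneous w (φ - ψ) m := by
  rw [← mem_weightedHomogeneousSubmodule] at h1 h2 ⊢
  exact Submodule.sub_mem _ h1 h2

def HomogCoeffs (w : ℕ × ℕ → ℕ) (f : PowerSeries Rg) : Prop :=
  ∀ k, IsWeightedHomogeneous w (coeff (R := Rg) k f) k

lemma HomogCoeffs.mul {w : ℕ × ℕ → ℕ} {f g : PowerSeries Rg}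
    (hf : HomogCoeffs w f) (hg : HomogCoeffs w g) : HomogCoeffs w (f * g) := by
  intro k
  rw [PowerSeries.coeff_mul]
  apply IsWeightedHomogeneous.sum
  intro p hp
  exact (Finset.HasAntidiagonal.mem_antidiagonal.mp hp) ▸ ((hf p.1).mul (hg p.2))

lemma HomogCoeffs.one {w : ℕ × ℕ → ℕ} : HomogCoeffs w (1 : PowerSeries Rg) := by
  intro k
  rw [PowerSeries.coeff_one]
  split
  · subst ‹k = 0›; exact isWeightedHomogeneous_one _ _
  · exact isWeightedHomogeneous_zero _ _ _

lemma HomogCoeffs.pow {w : ℕ × ℕ → ℕ} {f : PowerSeries Rg}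
    (hf : HomogCoeffs w f) (m : ℕ) : HomogCoeffs w (f ^ m) := by
  induction m with
  | zero => simpa using HomogCoeffs.one
  | succ m ih => rw [pow_succ]; exact ih.mul hf

lemma HomogCoeffs.Gm {f : PowerSeries Rg}
    (hf : HomogCoeffs (fun p : ℕ × ℕ => n * s - n * p.1 - s * p.2) f) :
    HomogCoeffs (fun p : ℕ × ℕ => n * s - n * p.1 - s * p.2) (BranchAux.Gm n s f) := by
  intro k
  unfold BranchAux.Gm
  rw [map_add, map_sum]
  apply IsWeightedHomogeneous.add
  · exact HomogCoeffs.one k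
  · apply IsWeightedHomogeneous.sum
    intro p hp
    rw [mul_assoc, PowerSeries.coeff_C_mul, PowerSeries.coeff_mul]
    rw [Finset.mul_sum]
    apply IsWeightedHomogeneous.sum
    intro q hq
    rw [PowerSeries.coeff_X_pow]
    split
    · rename_i hq1
      rw [one_mul]
      have hk : q.1 + q.2 = k := Finset.HasAntidiagonal.mem_antidiagonal.mp hq
      have h2 := (isWeightedHomogeneous_X (R := ℚ)
        (fun p : ℕ × ℕ => n * s - n * p.1 - s * p.2) p).mul ((hf.pow p.2) q.2)
      have hk2 : (n * s - n * p.1 - s * p.2) + q.2 = k := by rw [← hq1]; exact hk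
      exact hk2 ▸ h2
    · rw [zero_mul, mul_zero]
      exact isWeightedHomogeneous_zero _ _ _


lemma sol_homog (hn : 1 ≤ n) (u : PowerSeries Rg) (h0 : coeff (R := Rg) 0 u = 1)
    (heq : u ^ n = BranchAux.Gm n s u) :
    ∀ k, IsWeightedHomogeneous (fun p : ℕ × ℕ => n * s - n * p.1 - s * p.2)
      (coeff (R := Rg) k u) k := by
  intro k
  induction k using Nat.strong_induction_on with
  | _ k ih =>
    rcases Nat.eq_zero_or_pos k with rfl | hk
    · rw [h0]; exact isWeightedHomogeneous_one _ _
    · set V : PowerSeries Rg := PowerSeries.mk (fun i => if i < k then coeff (R := Rg) i u else 0)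
      have hV : ∀ i, coeff (R := Rg) i V = if i < k then coeff (R := Rg) i u else 0 :=
        fun i => PowerSeries.coeff_mk i _
      have hdvd : (X : PowerSeries Rg) ^ k ∣ u - V :=
        X_pow_dvd_iff.mpr (fun i hi => by rw [map_sub, hV, if_pos hi, sub_self])
      have hc0 : constantCoeff (R := Rg) u = constantCoeff (R := Rg) V := by
        rw [← coeff_zero_eq_constantCoeff_apply, ← coeff_zero_eq_constantCoeff_apply,
          hV, if_pos hk]
      have hVk : coeff (R := Rg) k V = 0 := by rw [hV, if_neg (lt_irrefl k)]
      have h1 := coeff_pow_key n hdvd hc0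
      have hG : coeff (R := Rg) k (BranchAux.Gm n s u) = coeff (R := Rg) k (BranchAux.Gm n s V) :=
        coeff_eq_of_dvd (Nat.lt_succ_self k) (Gm_dvd hdvd)
      have hu0 : constantCoeff (R := Rg) u = 1 := by
        rw [← coeff_zero_eq_constantCoeff_apply]; exact h0
      rw [hu0, one_pow, mul_one, hVk, sub_zero, heq, hG] at h1
      -- h1 : coeff k (Gm V) - coeff k (V^n) = n * coeff k u
      have hVhom : HomogCoeffs (fun p : ℕ × ℕ => n * s - n * p.1 - s * p.2) V := by
        intro i
        rw [hV]
        split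
        · exact ih i ‹i < k›
        · exact isWeightedHomogeneous_zero _ _ _
      have hD : IsWeightedHomogeneous (fun p : ℕ × ℕ => n * s - n * p.1 - s * p.2)
          (coeff (R := Rg) k (BranchAux.Gm n s V) - coeff (R := Rg) k (V ^ n)) k :=
        IsWH.sub ((hVhom.Gm) k) ((hVhom.pow n) k)
      have hne : (n : ℚ) ≠ 0 := by exact_mod_cast Nat.one_le_iff_ne_zero.mp hn
      have hcast : (n : Rg) = MvPolynomial.C (n : ℚ) := by
        simp [MvPolynomial.C_eq_coe_nat]
      have hform : coeff (R := Rg) k u = MvPolynomial.C ((n : ℚ)⁻¹) *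
          (coeff (R := Rg) k (BranchAux.Gm n s V) - coeff (R := Rg) k (V ^ n)) := by
        rw [h1, hcast, ← mul_assoc, ← MvPolynomial.C_mul, inv_mul_cancel₀ hne,
          MvPolynomial.C_1, one_mul]
      rw [hform]
      have := (isWeightedHomogeneous_C (R := ℚ)
        (fun p : ℕ × ℕ => n * s - n * p.1 - s * p.2) ((n : ℚ)⁻¹)).mul hD
      simpa using this

variable (n s) in
noncomputable def vseq : ℕ → PowerSeries Rg
  | 0 => 1
  | (k + 1) => vseq k + PowerSeries.C (R := Rg) (MvPolynomial.C ((n : ℚ)⁻¹) *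
      coeff (R := Rg) (k + 1) (BranchAux.Gm n s (vseq k) - (vseq k) ^ n)) *
      (X : PowerSeries Rg) ^ (k + 1)

lemma vseq_coeff_zero : ∀ k, coeff (R := Rg) 0 (vseq n s k) = 1 := by
  intro k
  induction k with
  | zero => simp [vseq]
  | succ k ih =>
    rw [vseq, map_add, ih, PowerSeries.coeff_C_mul, PowerSeries.coeff_X_pow,
      if_neg (by omega), mul_zero, add_zero]

lemma vseq_stable : ∀ k i, i ≤ k → coeff (R := Rg) i (vseq n s k) = coeff (R := Rg) i (vseq n s i) := by
  intro k
  induction k with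
  | zero => intro i hi; have : i = 0 := by omega
            subst this; rfl
  | succ k ih =>
    intro i hi
    rcases Nat.lt_succ_iff_lt_or_eq.mp (Nat.lt_succ_of_le hi) with h | rfl
    · rw [vseq, map_add, PowerSeries.coeff_C_mul, PowerSeries.coeff_X_pow,
        if_neg (by omega), mul_zero, add_zero]
      exact ih i (by omega)
    · rfl

lemma vseq_eq (hn : 1 ≤ n) :
    ∀ k, coeff (R := Rg) k ((vseq n s k) ^ n) = coeff (R := Rg) k (BranchAux.Gm n s (vseq n s k)) := by
  intro k
  induction k with
  | zero =>
    rw [Gm_constantCoeff]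
    show coeff (R := Rg) 0 ((1 : PowerSeries Rg) ^ n) = 1
    simp
  | succ k ih =>
    set w := vseq n s k with hw
    set e : Rg := MvPolynomial.C ((n : ℚ)⁻¹) *
      coeff (R := Rg) (k + 1) (BranchAux.Gm n s w - w ^ n) with he
    have hv : vseq n s (k + 1) = w + PowerSeries.C (R := Rg) e * (X : PowerSeries Rg) ^ (k + 1) := rfl
    have hdvd : (X : PowerSeries Rg) ^ (k + 1) ∣ vseq n s (k + 1) - w := by
      rw [hv, add_sub_cancel_left]
      exact Dvd.intro_left _ rfl
    have hc0 : constantCoeff (R := Rg) (vseq n s (k + 1)) = constantCoeff (R := Rg) w := by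
      rw [← coeff_zero_eq_constantCoeff_apply, ← coeff_zero_eq_constantCoeff_apply,
        vseq_coeff_zero, hw, vseq_coeff_zero]
    have h1 := coeff_pow_key (k := k + 1) n hdvd hc0
    have hck : coeff (R := Rg) (k + 1) (vseq n s (k + 1)) - coeff (R := Rg) (k + 1) w = e := by
      rw [hv, map_add, PowerSeries.coeff_C_mul, PowerSeries.coeff_X_pow, if_pos rfl,
        mul_one, add_sub_cancel_left]
    have hc1 : constantCoeff (R := Rg) (vseq n s (k + 1)) = 1 := by
      rw [← coeff_zero_eq_constantCoeff_apply, vseq_coeff_zero]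
    have hne : (n : ℚ) ≠ 0 := by exact_mod_cast Nat.one_le_iff_ne_zero.mp hn
    have hne2 : (n : Rg) * e = coeff (R := Rg) (k + 1) (BranchAux.Gm n s w - w ^ n) := by
      rw [he, ← mul_assoc]
      have hcast : (n : Rg) = MvPolynomial.C (n : ℚ) := by
        simp [MvPolynomial.C_eq_coe_nat]
      rw [hcast, ← MvPolynomial.C_mul, mul_inv_cancel₀ hne, MvPolynomial.C_1, one_mul]
    rw [hc1, one_pow, mul_one, hck, hne2, map_sub] at h1
    have hG : coeff (R := Rg) (k + 1) (BranchAux.Gm n s (vseq n s (k + 1)))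
        = coeff (R := Rg) (k + 1) (BranchAux.Gm n s w) :=
      coeff_eq_of_dvd (Nat.lt_succ_self (k + 1)) (Gm_dvd hdvd)
    rw [hG]
    linear_combination h1

variable (n s) in
noncomputable def Usol : PowerSeries Rg :=
  PowerSeries.mk (fun k => coeff (R := Rg) k (vseq n s k))

lemma Usol_dvd (k : ℕ) : (X : PowerSeries Rg) ^ (k + 1) ∣ Usol n s - vseq n s k := by
  apply X_pow_dvd_iff.mpr
  intro i hi
  rw [map_sub, Usol, PowerSeries.coeff_mk, ← vseq_stable k i (by omega), sub_self]

lemma Usol_coeff_zero : coeff (R := Rg) 0 (Usol n s) = 1 := by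
  rw [Usol, PowerSeries.coeff_mk, vseq_coeff_zero]

lemma Usol_solves (hn : 1 ≤ n) : (Usol n s) ^ n = BranchAux.Gm n s (Usol n s) := by
  ext k
  have hd1 := Usol_dvd (n := n) (s := s) k
  have hd : (X : PowerSeries Rg) ^ k ∣ Usol n s - vseq n s k :=
    dvd_trans (pow_dvd_pow _ (Nat.le_succ k)) hd1
  have hceq : coeff (R := Rg) k (Usol n s) = coeff (R := Rg) k (vseq n s k) :=
    coeff_eq_of_dvd (Nat.lt_succ_self k) hd1
  have hc0 : constantCoeff (R := Rg) (Usol n s) = constantCoeff (R := Rg) (vseq n s k) := by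
    rw [← coeff_zero_eq_constantCoeff_apply, ← coeff_zero_eq_constantCoeff_apply,
      Usol_coeff_zero, vseq_coeff_zero]
  have h1 := coeff_pow_key (k := k) n hd hc0
  rw [hceq, sub_self, mul_zero, sub_eq_zero] at h1
  have hG : coeff (R := Rg) k (BranchAux.Gm n s (Usol n s))
      = coeff (R := Rg) k (BranchAux.Gm n s (vseq n s k)) :=
    coeff_eq_of_dvd (Nat.lt_succ_self k) (Gm_dvd hd)
  rw [h1, hG, vseq_eq hn]

lemma unique_sol (hn : 1 ≤ n) (u v : PowerSeries Rg)
    (hu0 : coeff (R := Rg) 0 u = 1) (hu : u ^ n = BranchAux.Gm n s u)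
    (hv0 : coeff (R := Rg) 0 v = 1) (hv : v ^ n = BranchAux.Gm n s v) : u = v := by
  apply PowerSeries.ext
  intro k
  induction k using Nat.strong_induction_on with
  | _ k ih =>
    rcases Nat.eq_zero_or_pos k with rfl | hk
    · rw [hu0, hv0]
    · have hd : (X : PowerSeries Rg) ^ k ∣ u - v :=
        X_pow_dvd_iff.mpr (fun i hi => by rw [map_sub, ih i hi, sub_self])
      have hc0 : constantCoeff (R := Rg) u = constantCoeff (R := Rg) v := by
        rw [← coeff_zero_eq_constantCoeff_apply, ← coeff_zero_eq_constantCoeff_apply,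
          hu0, hv0]
      have h1 := coeff_pow_key (k := k) n hd hc0
      have hG : coeff (R := Rg) k (BranchAux.Gm n s u) = coeff (R := Rg) k (BranchAux.Gm n s v) :=
        coeff_eq_of_dvd (Nat.lt_succ_self k) (Gm_dvd hd)
      rw [hu, hv, hG, sub_self] at h1
      have hu1 : constantCoeff (R := Rg) u = 1 := by
        rw [← coeff_zero_eq_constantCoeff_apply, hu0]
      rw [hu1, one_pow, mul_one] at h1
      have hne : (n : Rg) ≠ 0 := by
        exact_mod_cast (Nat.cast_ne_zero (R := Rg)).mpr (Nat.one_le_iff_ne_zero.mp hn)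
      rcases mul_eq_zero.mp h1.symm with h | h
      · exact absurd h hne
      · exact sub_eq_zero.mp h

end BranchAux

theorem branch_at_infinity_exists_unique_homogeneous (n s : ℕ) (hn : 2 ≤ n)
    (hns : n < s) (hcop : Nat.Coprime n s) :
    (∃! u : PowerSeries (MvPolynomial (ℕ × ℕ) ℚ),
        PowerSeries.coeff (R := MvPolynomial (ℕ × ℕ) ℚ) 0 u = 1 ∧
        u ^ n = 1 + ∑ p ∈ (Finset.range s ×ˢ Finset.range n).filter
            (fun p => n * p.1 + s * p.2 < n * s),
          PowerSeries.C (R := MvPolynomial (ℕ × ℕ) ℚ) (MvPolynomial.X p) *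
            (PowerSeries.X : PowerSeries (MvPolynomial (ℕ × ℕ) ℚ)) ^
              (n * s - n * p.1 - s * p.2) * u ^ p.2) ∧
    (∀ u : PowerSeries (MvPolynomial (ℕ × ℕ) ℚ),
        PowerSeries.coeff (R := MvPolynomial (ℕ × ℕ) ℚ) 0 u = 1 →
        u ^ n = 1 + ∑ p ∈ (Finset.range s ×ˢ Finset.range n).filter
            (fun p => n * p.1 + s * p.2 < n * s),
          PowerSeries.C (R := MvPolynomial (ℕ × ℕ) ℚ) (MvPolynomial.X p) *
            (PowerSeries.X : PowerSeries (MvPolynomial (ℕ × ℕ) ℚ)) ^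
              (n * s - n * p.1 - s * p.2) * u ^ p.2 →
        ∀ k : ℕ,
          MvPolynomial.IsWeightedHomogeneous
            (fun p : ℕ × ℕ => n * s - n * p.1 - s * p.2)
            (PowerSeries.coeff (R := MvPolynomial (ℕ × ℕ) ℚ) k u) k) := by
  have hn1 : 1 ≤ n := by omega
  constructor
  · refine ⟨BranchAux.Usol n s, ⟨BranchAux.Usol_coeff_zero, ?_⟩, ?_⟩
    · exact BranchAux.Usol_solves hn1
    · rintro v ⟨hv0, hv⟩
      exact BranchAux.unique_sol hn1 v (BranchAux.Usol n s) hv0 hv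
        BranchAux.Usol_coeff_zero (BranchAux.Usol_solves hn1)
  · intro u h0 heq k
    exact BranchAux.sol_homog hn1 u h0 heq k
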